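/- arXiv:2403.06957 — 4 statements merged into one kernel-verified Lean document; each statement's English description precedes it below -/
import Mathlib

section
/- Let p ≤ n, let α ∈ I_n have dom(α) = {d₁ < d₂ < ⋯ < d_p} and set m_i = d_iα for i = 1,…,p. Then α ∈ IOF_n^par if and only if the following four conditions hold: (i) m₁ < m₂ < ⋯ < m_p; (ii) d₁ and m₁ have the same parity; (iii) for all i ∈ {1,…,p−1}, d_{i+1} − d_i = 1 if and only if m_{i+1} − m_i = 1; (iv) for all i ∈ {1,…,p−1}, d_{i+1} − d_i is even if and only if m_{i+1} − m_i is even. -/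
namespace IOFpar

/-- A partial injection on the chain `{1, …, n}`: a partial function with domain and
image contained in `{1, …, n}` that is injective where defined. -/
structure PInj (n : ℕ) where
  f : ℕ → Option ℕ
  mem_bounds : ∀ ⦃x y : ℕ⦄, f x = some y → x ∈ Finset.Icc 1 n ∧ y ∈ Finset.Icc 1 n
  inj : ∀ ⦃x₁ x₂ y : ℕ⦄, f x₁ = some y → f x₂ = some y → x₁ = x₂

/-- The domain of a partial injection. -/
def PInj.dom {n : ℕ} (α : PInj n) : Finset ℕ :=
  (Finset.Icc 1 n).filter fun x => (α.f x).isSome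

open Classical in
/-- The image of a partial injection. -/
noncomputable def PInj.im {n : ℕ} (α : PInj n) : Finset ℕ :=
  (Finset.Icc 1 n).filter fun y => ∃ x, α.f x = some y

/-- The rank of a partial injection: the size of its domain. -/
def PInj.rank {n : ℕ} (α : PInj n) : ℕ := α.dom.card

/-- The value of `α` at `x` (with junk value `0` outside the domain). -/
def PInj.app {n : ℕ} (α : PInj n) (x : ℕ) : ℕ := (α.f x).getD 0

/-- Composition of partial injections: `α.comp β` applies `α` first, then `β`
(so it corresponds to the product `αβ` with arguments written on the left). -/
def PInj.comp {n : ℕ} (α β : PInj n) : PInj n where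
  f x := (α.f x).bind β.f
  mem_bounds := by
    intro x y h
    rcases Option.bind_eq_some_iff.mp h with ⟨z, hz, hzy⟩
    exact ⟨(α.mem_bounds hz).1, (β.mem_bounds hzy).2⟩
  inj := by
    intro x₁ x₂ y h₁ h₂
    rcases Option.bind_eq_some_iff.mp h₁ with ⟨z₁, hz₁, hz₁y⟩
    rcases Option.bind_eq_some_iff.mp h₂ with ⟨z₂, hz₂, hz₂y⟩
    obtain rfl : z₁ = z₂ := β.inj hz₁y hz₂y
    exact α.inj hz₁ hz₂

/-- The empty transformation `ε`. -/
def epsilon (n : ℕ) : PInj n where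
  f _ := none
  mem_bounds := by intro x y h; simp at h
  inj := by intro x₁ x₂ y h; simp at h

/-- The fence (zig-zag) order on `{1, …, n}`: `k ≺ m` iff `|k - m| = 1`, `k` is odd
and `m` is even. -/
def fence (k m : ℕ) : Prop := (m = k + 1 ∨ k = m + 1) ∧ Odd k ∧ Even m

/-- `IOF n` is the set `IOF_n^par` of all partial injections on `{1, …, n}` that are
order-preserving, parity-preserving, fence-preserving, and whose inverse is also
fence-preserving. -/
def IOF (n : ℕ) : Set (PInj n) :=
  {α | (∀ ⦃x y x' y' : ℕ⦄, α.f x = some x' → α.f y = some y' → x < y → x' < y') ∧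
       (∀ ⦃x y : ℕ⦄, α.f x = some y → x % 2 = y % 2) ∧
       (∀ ⦃x y x' y' : ℕ⦄, α.f x = some x' → α.f y = some y' → fence x y → fence x' y') ∧
       (∀ ⦃x y x' y' : ℕ⦄, α.f x = some x' → α.f y = some y' → fence x' y' → fence x y)}

/-- The increasing enumeration of a finite set of naturals. -/
def sortedList (A : Finset ℕ) : List ℕ := A.sort (· ≤ ·)

/-- The relation `∼` on subsets of `{1, …, n}`:
`A ∼ B` iff `|A| = |B|`, corresponding elements (in increasing order) have the
same parity, and consecutive elements are at distance 1 in `A` iff they are in `B`. -/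
def sim (A B : Finset ℕ) : Prop :=
  A.card = B.card ∧
  (∀ (r : ℕ) (hA : r < (sortedList A).length) (hB : r < (sortedList B).length),
    (sortedList A)[r] % 2 = (sortedList B)[r] % 2) ∧
  (∀ (r : ℕ) (hA : r + 1 < (sortedList A).length) (hB : r + 1 < (sortedList B).length),
    ((sortedList A)[r + 1] = (sortedList A)[r] + 1 ↔
      (sortedList B)[r + 1] = (sortedList B)[r] + 1))

/-- `P ⊆ P(n̄)` is admissible: it contains `∅`, is convex, and is closed under `∼`. -/
def Admissible (n : ℕ) (P : Set (Finset ℕ)) : Prop :=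
  (∀ A ∈ P, A ⊆ Finset.Icc 1 n) ∧
  (∅ : Finset ℕ) ∈ P ∧
  (∀ A ∈ P, ∀ B ∈ P, ∀ C : Finset ℕ, A ⊆ C → C ⊆ B → C ∈ P) ∧
  (∀ y ∈ P, ∀ z : Finset ℕ, z ⊆ Finset.Icc 1 n → sim z y → z ∈ P)

/-- `I_X = {α ∈ IOF_n^par : dom(α) ∈ X}`. -/
def IX (n : ℕ) (X : Set (Finset ℕ)) : Set (PInj n) :=
  {α | α ∈ IOF n ∧ α.dom ∈ X}

/-- An ideal of the monoid `IOF_n^par`. -/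
def IsIdeal (n : ℕ) (I : Set (PInj n)) : Prop :=
  I.Nonempty ∧ I ⊆ IOF n ∧ ∀ a ∈ I, ∀ b ∈ IOF n, a.comp b ∈ I ∧ b.comp a ∈ I

/-- `del y t` is `y^[t+1]` in the paper's (1-based) notation: `y` with its `t`-th
smallest element removed (`t` being 0-based here). -/
def del (y : Finset ℕ) (t : ℕ) : Finset ℕ := y.erase ((sortedList y).getD t 0)

/-- `x ⊑ y`: `x` is obtained from `y` by removing one element. -/
def sqsub (x y : Finset ℕ) : Prop := ∃ t < y.card, x = del y t

/-- `A_Γ = {Δ ∈ P : Δ ∼ Γ}`. -/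
def Aset (P : Set (Finset ℕ)) (Γ : Finset ℕ) : Set (Finset ℕ) :=
  {Δ ∈ P | sim Δ Γ}

/-- `B_Γ = {Δ^[t] : Δ ∈ A_Γ, t ∈ {1,…,|Δ|}}`. -/
def Bset (P : Set (Finset ℕ)) (Γ : Finset ℕ) : Set (Finset ℕ) :=
  {D | ∃ Δ ∈ Aset P Γ, ∃ t < Δ.card, D = del Δ t}

/-- `B = {B_Γ : Γ ∈ P, |Γ| ≥ 2, |A_Γ| ≥ 2}`. -/
def Bfam (P : Set (Finset ℕ)) : Set (Set (Finset ℕ)) :=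
  {E | ∃ Γ ∈ P, 2 ≤ Γ.card ∧ 2 ≤ (Aset P Γ).ncard ∧ E = Bset P Γ}

/-- `C = {{g} : g ∈ P, (g ⊑ y for some y ∈ P with y ≁ z for all z ∈ P \ {y}) or
(g ⋢ z for all z ∈ P)}`. -/
def Cfam (P : Set (Finset ℕ)) : Set (Set (Finset ℕ)) :=
  {D | ∃ g ∈ P, D = {g} ∧
    ((∃ y ∈ P, sqsub g y ∧ ∀ z ∈ P, z ≠ y → ¬ sim y z) ∨ (∀ z ∈ P, ¬ sqsub g z))}

/-- `BC_{Δ₁} = {Δ ∈ B ∪ C : x ∼ y for all x ∈ Δ, y ∈ Δ₁}`. -/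
def BCset (P : Set (Finset ℕ)) (Δ₁ : Set (Finset ℕ)) : Set (Set (Finset ℕ)) :=
  {Δ ∈ Bfam P ∪ Cfam P | ∀ x ∈ Δ, ∀ y ∈ Δ₁, sim x y}

/-- `T_Δ = {c ∈ I_P : dom(c) ∈ Δ, im(c) ∈ Δ}`. -/
def Tset (n : ℕ) (P : Set (Finset ℕ)) (Δ : Set (Finset ℕ)) : Set (PInj n) :=
  {c ∈ IX n P | c.dom ∈ Δ ∧ c.im ∈ Δ}

/-- `T_Q` for a pair `Q = (Q₁, Q₂)`. -/
def TQ (n : ℕ) (P : Set (Finset ℕ)) (Q₁ Q₂ : Set (Set (Finset ℕ))) : Set (PInj n) :=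
  {c ∈ IX n P | (∃ Δ ∈ Q₁, c.dom ∈ Δ) ∧ (∃ Δ ∈ Q₂, c.im ∈ Δ)}

/-- `I_P^u`: the elements of `I_P` that are not expressible in the special product form. -/
def Iu (n : ℕ) (P : Set (Finset ℕ)) : Set (PInj n) :=
  {α ∈ IX n P | ¬ ∃ y₁ ∈ P, ∃ z₁ ∈ P, ∃ y₂ ∈ P, ∃ z₂ ∈ P, ∃ r < y₁.card, ∃ s < y₁.card,
    y₁.card = z₁.card ∧ 2 ≤ y₁.card ∧
    sim y₂ y₁ ∧ sim z₂ z₁ ∧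
    del y₁ r = y₁ ∩ z₁ ∧ del z₁ s = y₁ ∩ z₁ ∧
    sim (del y₂ r) (del z₂ s) ∧ sim (del z₂ s) (y₁ ∩ z₁) ∧
    α.dom = del y₂ r ∧ α.im = del z₂ s}

/-- `T` is a subsemigroup of `S` (a subset of `S` closed under composition). -/
def IsSubsemigroup (n : ℕ) (S T : Set (PInj n)) : Prop :=
  T ⊆ S ∧ ∀ a ∈ T, ∀ b ∈ T, a.comp b ∈ T

/-- `T` is a maximal subsemigroup of `S`. -/
def IsMaxSubsemigroup (n : ℕ) (S T : Set (PInj n)) : Prop :=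
  IsSubsemigroup n S T ∧ T ≠ S ∧
  ∀ U : Set (PInj n), IsSubsemigroup n S U → T ⊆ U → U ⊆ S → U = T ∨ U = S

/-- The left "translate set" `Ma` in the monoid `M = IOF_n^par`. -/
def lset (n : ℕ) (a : PInj n) : Set (PInj n) := {c | ∃ m ∈ IOF n, m.comp a = c}

/-- The right "translate set" `aM` in the monoid `M = IOF_n^par`. -/
def rset (n : ℕ) (a : PInj n) : Set (PInj n) := {c | ∃ m ∈ IOF n, a.comp m = c}

/-- The two-sided "translate set" `MaM` in the monoid `M = IOF_n^par`. -/
def jset (n : ℕ) (a : PInj n) : Set (PInj n) :=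
  {c | ∃ m₁ ∈ IOF n, ∃ m₂ ∈ IOF n, (m₁.comp a).comp m₂ = c}


lemma PInj.mem_dom' {n : ℕ} (α : PInj n) {x y : ℕ} (h : α.f x = some y) : x ∈ α.dom :=
  Finset.mem_filter.mpr ⟨(α.mem_bounds h).1, by simp [h]⟩

lemma PInj.app_of {n : ℕ} (α : PInj n) {x y : ℕ} (h : α.f x = some y) : α.app x = y := by
  simp [PInj.app, h]

lemma PInj.f_of_mem_dom {n : ℕ} (α : PInj n) {x : ℕ} (h : x ∈ α.dom) :
    α.f x = some (α.app x) := by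
  have h2 := (Finset.mem_filter.mp h).2
  rcases Option.isSome_iff_exists.mp h2 with ⟨y, hy⟩
  rw [hy, α.app_of hy]

/-- Characterization of the elements of `IOF_n^par`:
`α ∈ IOF_n^par` iff (i) the image values (in the order of the sorted domain)
are strictly increasing, (ii) the least domain element and its image have the
same parity, (iii) consecutive domain elements are at distance 1 iff their
images are, and (iv) gaps between consecutive domain elements are even iff the
corresponding image gaps are. -/
theorem statement_0 (n : ℕ) (hn : 0 < n) (α : PInj n) :
    α ∈ IOF n ↔
      ((∀ (i j : ℕ) (hi : i < (sortedList α.dom).length)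
          (hj : j < (sortedList α.dom).length), i < j →
          α.app ((sortedList α.dom)[i]) < α.app ((sortedList α.dom)[j])) ∧
       (∀ h0 : 0 < (sortedList α.dom).length,
          (sortedList α.dom)[0] % 2 = α.app ((sortedList α.dom)[0]) % 2) ∧
       (∀ (i : ℕ) (hi : i + 1 < (sortedList α.dom).length),
          ((sortedList α.dom)[i + 1] = (sortedList α.dom)[i] + 1 ↔
            α.app ((sortedList α.dom)[i + 1]) = α.app ((sortedList α.dom)[i]) + 1)) ∧
       (∀ (i : ℕ) (hi : i + 1 < (sortedList α.dom).length),
          (Even ((sortedList α.dom)[i + 1] - (sortedList α.dom)[i]) ↔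
            Even (α.app ((sortedList α.dom)[i + 1]) - α.app ((sortedList α.dom)[i]))))) := by
  classical
  set L := sortedList α.dom with hLdef
  simp only [← hLdef]
  have hsort : L.Pairwise (· < ·) := List.sortedLT_iff_pairwise.mp α.dom.sortedLT_sort
  have hlt : ∀ (i j : ℕ) (hi : i < L.length) (hj : j < L.length), i < j → L[i] < L[j] :=
    List.pairwise_iff_getElem.mp hsort
  have hmemL : ∀ (i : ℕ) (hi : i < L.length), L[i] ∈ α.dom := by
    intro i hi
    exact (Finset.mem_sort _).mp (List.getElem_mem hi)
  have hfL : ∀ (i : ℕ) (hi : i < L.length), α.f L[i] = some (α.app L[i]) :=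
    fun i hi => α.f_of_mem_dom (hmemL i hi)
  have hidx : ∀ x ∈ α.dom, ∃ i, ∃ hi : i < L.length, L[i] = x := by
    intro x hx
    exact List.mem_iff_getElem.mp ((Finset.mem_sort _).mpr hx)
  have hmono : ∀ (i j : ℕ) (hi : i < L.length) (hj : j < L.length), L[i] < L[j] → i < j := by
    intro i j hi hj h
    rcases lt_trichotomy i j with h' | h' | h'
    · exact h'
    · have e : L[i] = L[j] := by subst h'; rfl
      omega
    · have := hlt j i hj hi h'; omega
  have hadj : ∀ (i j : ℕ) (hi : i < L.length) (hj : j < L.length),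
      L[j] = L[i] + 1 → j = i + 1 := by
    intro i j hi hj h
    have hij : i < j := hmono i j hi hj (by omega)
    by_contra hne
    have hi1 : i + 1 < L.length := by omega
    have a := hlt i (i+1) hi hi1 (by omega)
    have b := hlt (i+1) j hi1 hj (by omega)
    omega
  constructor
  · rintro ⟨hord, hparity, hfn, hfn'⟩
    refine ⟨?_, ?_, ?_, ?_⟩
    · intro i j hi hj hij
      exact hord (hfL i hi) (hfL j hj) (hlt i j hi hj hij)
    · intro h0
      exact hparity (hfL 0 h0)
    · intro i hi
      have hi' : i < L.length := by omega
      have hx := hfL i hi'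
      have hy := hfL (i+1) hi
      have hxy : L[i] < L[i+1] := hlt i (i+1) hi' hi (by omega)
      have hxy' : α.app L[i] < α.app L[i+1] := hord hx hy hxy
      constructor
      · intro h
        rcases Nat.even_or_odd L[i] with he | ho
        · have hf := hfn hy hx ⟨Or.inr h, by rw [h]; exact he.add_one, he⟩
          rcases hf.1 with h' | h'
          · omega
          · exact h'
        · have hf := hfn hx hy ⟨Or.inl h, ho, by rw [h]; exact ho.add_one⟩
          rcases hf.1 with h' | h'
          · exact h'
          · omega
      · intro h
        rcases Nat.even_or_odd (α.app L[i]) with he | ho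
        · have hf := hfn' hy hx ⟨Or.inr h, by rw [h]; exact he.add_one, he⟩
          rcases hf.1 with h' | h'
          · omega
          · exact h'
        · have hf := hfn' hx hy ⟨Or.inl h, ho, by rw [h]; exact ho.add_one⟩
          rcases hf.1 with h' | h'
          · exact h'
          · omega
    · intro i hi
      have hi' : i < L.length := by omega
      have p1 := hparity (hfL i hi')
      have p2 := hparity (hfL (i+1) hi)
      have hxy : L[i] < L[i+1] := hlt i (i+1) hi' hi (by omega)
      have hxy' := hord (hfL i hi') (hfL (i+1) hi) hxy
      rw [Nat.even_iff, Nat.even_iff]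
      omega
  · rintro ⟨h1, h2, h3, h4⟩
    have hpar : ∀ (i : ℕ) (hi : i < L.length), L[i] % 2 = α.app L[i] % 2 := by
      intro i
      induction i with
      | zero => intro hi; exact h2 hi
      | succ k ih =>
        intro hi
        have hk : k < L.length := by omega
        have h4' := h4 k hi
        have hm := h1 k (k+1) hk hi (by omega)
        have hd := hlt k (k+1) hk hi (by omega)
        have ihk := ih hk
        rw [Nat.even_iff, Nat.even_iff] at h4'
        omega
    have hmonoM : ∀ (i j : ℕ) (hi : i < L.length) (hj : j < L.length),
        α.app L[i] < α.app L[j] → i < j := by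
      intro i j hi hj h
      rcases lt_trichotomy i j with h' | h' | h'
      · exact h'
      · have e : α.app L[i] = α.app L[j] := by subst h'; rfl
        omega
      · have := h1 j i hj hi h'; omega
    have hadjM : ∀ (i j : ℕ) (hi : i < L.length) (hj : j < L.length),
        α.app L[j] = α.app L[i] + 1 → j = i + 1 := by
      intro i j hi hj h
      have hij : i < j := hmonoM i j hi hj (by omega)
      by_contra hne
      have hi1 : i + 1 < L.length := by omega
      have a := h1 i (i+1) hi hi1 (by omega)
      have b := h1 (i+1) j hi1 hj (by omega)
      omega
    refine ⟨?_, ?_, ?_, ?_⟩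
    · intro x y x' y' hx hy hxy
      obtain ⟨i, hi, hLi⟩ := hidx x (α.mem_dom' hx)
      obtain ⟨j, hj, hLj⟩ := hidx y (α.mem_dom' hy)
      have hij : i < j := hmono i j hi hj (by rw [hLi, hLj]; exact hxy)
      have key := h1 i j hi hj hij
      rw [hLi, hLj, α.app_of hx, α.app_of hy] at key
      exact key
    · intro x y hx
      obtain ⟨i, hi, hLi⟩ := hidx x (α.mem_dom' hx)
      have key := hpar i hi
      rw [hLi, α.app_of hx] at key
      exact key
    · intro x y x' y' hx hy hf
      obtain ⟨hor, hox, hey⟩ := hf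
      obtain ⟨i, hi, hLi⟩ := hidx x (α.mem_dom' hx)
      obtain ⟨j, hj, hLj⟩ := hidx y (α.mem_dom' hy)
      have px := hpar i hi; rw [hLi, α.app_of hx] at px
      have py := hpar j hj; rw [hLj, α.app_of hy] at py
      rw [Nat.odd_iff] at hox
      rw [Nat.even_iff] at hey
      rcases hor with h | h
      · have hji : j = i + 1 := hadj i j hi hj (by rw [hLi, hLj]; exact h)
        subst hji
        have h3' := (h3 i hj).mp (by rw [hLi, hLj]; exact h)
        rw [hLi, hLj, α.app_of hx, α.app_of hy] at h3'
        exact ⟨Or.inl h3', Nat.odd_iff.mpr (by omega), Nat.even_iff.mpr (by omega)⟩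
      · have hij : i = j + 1 := hadj j i hj hi (by rw [hLi, hLj]; exact h)
        subst hij
        have h3' := (h3 j hi).mp (by rw [hLi, hLj]; exact h)
        rw [hLi, hLj, α.app_of hx, α.app_of hy] at h3'
        exact ⟨Or.inr h3', Nat.odd_iff.mpr (by omega), Nat.even_iff.mpr (by omega)⟩
    · intro x y x' y' hx hy hf
      obtain ⟨hor, hox, hey⟩ := hf
      obtain ⟨i, hi, hLi⟩ := hidx x (α.mem_dom' hx)
      obtain ⟨j, hj, hLj⟩ := hidx y (α.mem_dom' hy)
      have px := hpar i hi; rw [hLi, α.app_of hx] at px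
      have py := hpar j hj; rw [hLj, α.app_of hy] at py
      rw [Nat.odd_iff] at hox
      rw [Nat.even_iff] at hey
      rcases hor with h | h
      · have hji : j = i + 1 := hadjM i j hi hj
          (by rw [hLi, hLj, α.app_of hx, α.app_of hy]; exact h)
        subst hji
        have h3' := (h3 i hj).mpr (by rw [hLi, hLj, α.app_of hx, α.app_of hy]; exact h)
        rw [hLi, hLj] at h3'
        exact ⟨Or.inl h3', Nat.odd_iff.mpr (by omega), Nat.even_iff.mpr (by omega)⟩
      · have hij : i = j + 1 := hadjM j i hj hi
          (by rw [hLi, hLj, α.app_of hx, α.app_of hy]; exact h)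
        subst hij
        have h3' := (h3 j hi).mpr (by rw [hLi, hLj, α.app_of hx, α.app_of hy]; exact h)
        rw [hLi, hLj] at h3'
        exact ⟨Or.inr h3', Nat.odd_iff.mpr (by omega), Nat.even_iff.mpr (by omega)⟩

end IOFpar
end

section
/- For all subsets A, B of n̄, there exists α ∈ IOF_n^par with dom(α) = A and im(α) = B if and only if A ∼ B. -/
namespace IOFpar

private lemma fence_char {k m : ℕ} :
    fence k m ↔ (m = k + 1 ∨ k = m + 1) ∧ k % 2 = 1 ∧ m % 2 = 0 := by
  unfold fence
  rw [Nat.odd_iff, Nat.even_iff]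

private lemma idx_lt {l : List ℕ} (hl : l.Pairwise (· < ·)) {i j : ℕ}
    (hi : i < l.length) (hj : j < l.length) (h : l[i] < l[j]) : i < j := by
  rcases Nat.lt_trichotomy i j with h' | h' | h'
  · exact h'
  · subst h'; omega
  · have := List.pairwise_iff_getElem.mp hl j i hj hi h'
    omega

private lemma idx_succ {l : List ℕ} (hl : l.Pairwise (· < ·)) {i j : ℕ}
    (hi : i < l.length) (hj : j < l.length) (h : l[j] = l[i] + 1) : j = i + 1 := by
  have hij : i < j := idx_lt hl hi hj (by omega)
  by_contra hc
  have h1 : i + 1 < j := by omega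
  have h2 : i + 1 < l.length := by omega
  have ha := List.pairwise_iff_getElem.mp hl i (i + 1) hi h2 (by omega)
  have hb := List.pairwise_iff_getElem.mp hl (i + 1) j h2 hj h1
  omega

/-- For subsets `A, B ⊆ n̄`, there exists `α ∈ IOF_n^par` with
`dom(α) = A` and `im(α) = B` iff `A ∼ B`. -/
theorem statement_2 (n : ℕ) (hn : 0 < n) (A B : Finset ℕ)
    (hA : A ⊆ Finset.Icc 1 n) (hB : B ⊆ Finset.Icc 1 n) :
    (∃ α ∈ IOF n, α.dom = A ∧ α.im = B) ↔ sim A B := by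
  classical
  have hsaS : (sortedList A).Pairwise (· < ·) := (Finset.sortedLT_sort A).pairwise
  have hsbS : (sortedList B).Pairwise (· < ·) := (Finset.sortedLT_sort B).pairwise
  have hsaN : (sortedList A).Nodup := A.sort_nodup _
  have hsbN : (sortedList B).Nodup := B.sort_nodup _
  have hlenA : (sortedList A).length = A.card := Finset.length_sort _
  have hlenB : (sortedList B).length = B.card := Finset.length_sort _
  constructor
  · rintro ⟨α, ⟨hord, hpar, hfen, hfen'⟩, hdom, him⟩
    have hdmem : ∀ x, x ∈ A ↔ ∃ y, α.f x = some y := by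
      intro x
      rw [← hdom]
      simp only [PInj.dom, Finset.mem_filter, Option.isSome_iff_exists]
      constructor
      · rintro ⟨-, h⟩; exact h
      · rintro ⟨y, hy⟩; exact ⟨(α.mem_bounds hy).1, y, hy⟩
    have himem : ∀ y, y ∈ B ↔ ∃ x, α.f x = some y := by
      intro y
      rw [← him]
      simp only [PInj.im, Finset.mem_filter]
      constructor
      · rintro ⟨-, h⟩; exact h
      · rintro ⟨x, hx⟩; exact ⟨(α.mem_bounds hx).2, x, hx⟩
    have happ : ∀ {x y : ℕ}, α.f x = some y → α.app x = y := by
      intro x y h; simp [PInj.app, h]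
    have hL : (sortedList A).map α.app = sortedList B := by
      apply fun hp hs => List.Perm.eq_of_pairwise' hs hsbS hp
      · apply (List.perm_ext_iff_of_nodup ?_ hsbN).mpr
        · intro z
          simp only [List.mem_map]
          constructor
          · rintro ⟨x, hx, rfl⟩
            obtain ⟨y, hy⟩ := (hdmem x).mp ((Finset.mem_sort _).mp hx)
            rw [happ hy]
            exact (Finset.mem_sort _).mpr ((himem y).mpr ⟨x, hy⟩)
          · intro hz
            obtain ⟨x, hx⟩ := (himem z).mp ((Finset.mem_sort _).mp hz)
            exact ⟨x, (Finset.mem_sort _).mpr ((hdmem x).mpr ⟨z, hx⟩), happ hx⟩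
        · refine List.Nodup.map_on ?_ hsaN
          intro x hx y hy hxy
          obtain ⟨x', hx'⟩ := (hdmem x).mp ((Finset.mem_sort _).mp hx)
          obtain ⟨y', hy'⟩ := (hdmem y).mp ((Finset.mem_sort _).mp hy)
          rw [happ hx', happ hy'] at hxy
          subst hxy
          exact α.inj hx' hy'
      · rw [List.pairwise_map]
        refine List.Pairwise.imp_of_mem ?_ hsaS
        intro x y hx hy hlt
        obtain ⟨x', hx'⟩ := (hdmem x).mp ((Finset.mem_sort _).mp hx)
        obtain ⟨y', hy'⟩ := (hdmem y).mp ((Finset.mem_sort _).mp hy)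
        rw [happ hx', happ hy']
        exact hord hx' hy' hlt
    have hlen : (sortedList A).length = (sortedList B).length := by
      rw [← hL, List.length_map]
    have key : ∀ r (hr : r < (sortedList A).length) (hr' : r < (sortedList B).length),
        α.f (sortedList A)[r] = some (sortedList B)[r] := by
      intro r hr hr'
      obtain ⟨y, hy⟩ := (hdmem _).mp ((Finset.mem_sort _).mp (List.getElem_mem hr))
      have h2 : (sortedList B)[r] = α.app (sortedList A)[r] := by
        rw [List.getElem_of_eq hL.symm hr', List.getElem_map]
      rw [h2, happ hy]
      exact hy
    refine ⟨by rw [← hlenA, ← hlenB, hlen], ?_, ?_⟩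
    · intro r hrA hrB
      exact hpar (key r hrA hrB)
    · intro r hrA hrB
      have hrA0 : r < (sortedList A).length := by omega
      have hrB0 : r < (sortedList B).length := by omega
      have k1 := key r hrA0 hrB0
      have k2 := key (r + 1) hrA hrB
      have hxy : (sortedList A)[r] < (sortedList A)[r + 1] :=
        List.pairwise_iff_getElem.mp hsaS r (r + 1) hrA0 hrA (by omega)
      have hxy' : (sortedList B)[r] < (sortedList B)[r + 1] := hord k1 k2 hxy
      have p1 := hpar k1
      have p2 := hpar k2
      constructor
      · intro h
        rcases Nat.mod_two_eq_zero_or_one (sortedList A)[r] with hx | hx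
        · have hf : fence (sortedList A)[r + 1] (sortedList A)[r] :=
            fence_char.mpr ⟨Or.inr h, by omega, hx⟩
          have := fence_char.mp (hfen k2 k1 hf)
          omega
        · have hf : fence (sortedList A)[r] (sortedList A)[r + 1] :=
            fence_char.mpr ⟨Or.inl h, hx, by omega⟩
          have := fence_char.mp (hfen k1 k2 hf)
          omega
      · intro h
        rcases Nat.mod_two_eq_zero_or_one (sortedList B)[r] with hx | hx
        · have hf : fence (sortedList B)[r + 1] (sortedList B)[r] :=
            fence_char.mpr ⟨Or.inr h, by omega, hx⟩
          have := fence_char.mp (hfen' k2 k1 hf)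
          omega
        · have hf : fence (sortedList B)[r] (sortedList B)[r + 1] :=
            fence_char.mpr ⟨Or.inl h, hx, by omega⟩
          have := fence_char.mp (hfen' k1 k2 hf)
          omega
  · rintro ⟨hcard, hpar, hadj⟩
    have hlen : (sortedList A).length = (sortedList B).length := by
      rw [hlenA, hlenB, hcard]
    set F : ℕ → Option ℕ :=
      fun x => if x ∈ A then (sortedList B)[(sortedList A).idxOf x]? else none with hF
    have hidxlt : ∀ {x : ℕ}, x ∈ A → (sortedList A).idxOf x < (sortedList A).length :=
      fun hx => List.idxOf_lt_length_iff.mpr ((Finset.mem_sort _).mpr hx)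
    have hFval : ∀ {x : ℕ} (hx : x ∈ A),
        F x = some ((sortedList B)[(sortedList A).idxOf x]'(hlen ▸ hidxlt hx)) := by
      intro x hx
      simp only [hF, if_pos hx]
      exact List.getElem?_eq_getElem (hlen ▸ hidxlt hx)
    have hFs : ∀ {x y : ℕ}, F x = some y →
        ∃ _ : x ∈ A, ∃ hi : (sortedList A).idxOf x < (sortedList B).length,
          (sortedList B)[(sortedList A).idxOf x] = y := by
      intro x y h
      by_cases hx : x ∈ A
      · rw [hFval hx] at h
        exact ⟨hx, hlen ▸ hidxlt hx, by injection h⟩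
      · simp only [hF, if_neg hx] at h
        exact absurd h (by simp)
    have hidx : ∀ {x : ℕ} (hx : x ∈ A),
        (sortedList A)[(sortedList A).idxOf x]'(hidxlt hx) = x :=
      fun hx => List.getElem_idxOf (hidxlt hx)
    refine ⟨⟨F, ?_, ?_⟩, ⟨?_, ?_, ?_, ?_⟩, ?_, ?_⟩
    · -- mem_bounds
      intro x y h
      obtain ⟨hx, hi, hv⟩ := hFs h
      refine ⟨hA hx, hB ?_⟩
      rw [← hv]
      exact (Finset.mem_sort _).mp (List.getElem_mem hi)
    · -- inj
      intro x₁ x₂ y h₁ h₂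
      obtain ⟨hx₁, hi₁, hv₁⟩ := hFs h₁
      obtain ⟨hx₂, hi₂, hv₂⟩ := hFs h₂
      have hidxeq : (sortedList A).idxOf x₁ = (sortedList A).idxOf x₂ :=
        (hsbN.getElem_inj_iff).mp (by rw [hv₁, hv₂])
      have e1 := hidx hx₁
      have e2 := hidx hx₂
      simp only [hidxeq] at e1
      exact e1.symm.trans e2
    · -- order-preserving
      intro x y x' y' hx hy hlt
      obtain ⟨hxA, hix, hvx⟩ := hFs hx
      obtain ⟨hyA, hiy, hvy⟩ := hFs hy
      have hij : (sortedList A).idxOf x < (sortedList A).idxOf y := by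
        apply idx_lt hsaS (hidxlt hxA) (hidxlt hyA)
        rw [hidx hxA, hidx hyA]; exact hlt
      rw [← hvx, ← hvy]
      exact List.pairwise_iff_getElem.mp hsbS _ _ hix hiy hij
    · -- parity-preserving
      intro x y h
      obtain ⟨hxA, hi, hv⟩ := hFs h
      have e := hpar _ (hidxlt hxA) hi
      rw [hidx hxA, hv] at e
      exact e
    · -- fence-preserving
      intro x y x' y' hx hy hf
      obtain ⟨hxA, hix, hvx⟩ := hFs hx
      obtain ⟨hyA, hiy, hvy⟩ := hFs hy
      obtain ⟨hor, hox, hey⟩ := fence_char.mp hf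
      have px := hpar _ (hidxlt hxA) hix
      rw [hidx hxA, hvx] at px
      have py := hpar _ (hidxlt hyA) hiy
      rw [hidx hyA, hvy] at py
      rcases hor with h | h
      · -- y = x + 1
        have hj : (sortedList A).idxOf y = (sortedList A).idxOf x + 1 := by
          apply idx_succ hsaS (hidxlt hxA) (hidxlt hyA)
          rw [hidx hxA, hidx hyA]; exact h
        have hilt : (sortedList A).idxOf x + 1 < (sortedList A).length := by
          have := hidxlt hyA; omega
        have hAside : (sortedList A)[(sortedList A).idxOf x + 1]'hilt =
            (sortedList A)[(sortedList A).idxOf x]'(hidxlt hxA) + 1 := by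
          have e1 : (sortedList A)[(sortedList A).idxOf x + 1]'hilt = y := by
            simp only [← hj]
            exact hidx hyA
          have e2 := hidx hxA
          omega
        have hBside := (hadj ((sortedList A).idxOf x) hilt (by omega)).mp hAside
        have e1 : (sortedList B)[(sortedList A).idxOf x + 1]'(by omega) = y' := by
          simp only [← hj]
          exact hvy
        refine fence_char.mpr ⟨Or.inl ?_, by omega, by omega⟩
        omega
      · -- x = y + 1
        have hj : (sortedList A).idxOf x = (sortedList A).idxOf y + 1 := by
          apply idx_succ hsaS (hidxlt hyA) (hidxlt hxA)
          rw [hidx hxA, hidx hyA]; exact h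
        have hilt : (sortedList A).idxOf y + 1 < (sortedList A).length := by
          have := hidxlt hxA; omega
        have hAside : (sortedList A)[(sortedList A).idxOf y + 1]'hilt =
            (sortedList A)[(sortedList A).idxOf y]'(hidxlt hyA) + 1 := by
          have e1 : (sortedList A)[(sortedList A).idxOf y + 1]'hilt = x := by
            simp only [← hj]
            exact hidx hxA
          have e2 := hidx hyA
          omega
        have hBside := (hadj ((sortedList A).idxOf y) hilt (by omega)).mp hAside
        have e1 : (sortedList B)[(sortedList A).idxOf y + 1]'(by omega) = x' := by
          simp only [← hj]
          exact hvx
        refine fence_char.mpr ⟨Or.inr ?_, by omega, by omega⟩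
        omega
    · -- inverse fence-preserving
      intro x y x' y' hx hy hf
      obtain ⟨hxA, hix, hvx⟩ := hFs hx
      obtain ⟨hyA, hiy, hvy⟩ := hFs hy
      obtain ⟨hor, hox, hey⟩ := fence_char.mp hf
      have px := hpar _ (hidxlt hxA) hix
      rw [hidx hxA, hvx] at px
      have py := hpar _ (hidxlt hyA) hiy
      rw [hidx hyA, hvy] at py
      rcases hor with h | h
      · -- y' = x' + 1
        have hj : (sortedList A).idxOf y = (sortedList A).idxOf x + 1 := by
          apply idx_succ hsbS hix hiy
          rw [hvx, hvy]; exact h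
        have hilt : (sortedList A).idxOf x + 1 < (sortedList A).length := by
          have := hidxlt hyA; omega
        have hBside : (sortedList B)[(sortedList A).idxOf x + 1]'(by omega) =
            (sortedList B)[(sortedList A).idxOf x]'hix + 1 := by
          have e1 : (sortedList B)[(sortedList A).idxOf x + 1]'(by omega) = y' := by
            simp only [← hj]
            exact hvy
          omega
        have hAside := (hadj ((sortedList A).idxOf x) hilt (by omega)).mpr hBside
        have e1 : (sortedList A)[(sortedList A).idxOf x + 1]'hilt = y := by
          simp only [← hj]
          exact hidx hyA
        have e2 := hidx hxA
        refine fence_char.mpr ⟨Or.inl ?_, by omega, by omega⟩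
        omega
      · -- x' = y' + 1
        have hj : (sortedList A).idxOf x = (sortedList A).idxOf y + 1 := by
          apply idx_succ hsbS hiy hix
          rw [hvx, hvy]; exact h
        have hilt : (sortedList A).idxOf y + 1 < (sortedList A).length := by
          have := hidxlt hxA; omega
        have hBside : (sortedList B)[(sortedList A).idxOf y + 1]'(by omega) =
            (sortedList B)[(sortedList A).idxOf y]'hiy + 1 := by
          have e1 : (sortedList B)[(sortedList A).idxOf y + 1]'(by omega) = x' := by
            simp only [← hj]
            exact hvx
          omega
        have hAside := (hadj ((sortedList A).idxOf y) hilt (by omega)).mpr hBside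
        have e1 : (sortedList A)[(sortedList A).idxOf y + 1]'hilt = x := by
          simp only [← hj]
          exact hidx hxA
        have e2 := hidx hyA
        refine fence_char.mpr ⟨Or.inr ?_, by omega, by omega⟩
        omega
    · -- dom = A
      ext x
      simp only [PInj.dom, Finset.mem_filter, Option.isSome_iff_exists]
      constructor
      · rintro ⟨-, y, hy⟩
        exact (hFs hy).1
      · intro hx
        exact ⟨hA hx, _, hFval hx⟩
    · -- im = B
      ext y
      simp only [PInj.im, Finset.mem_filter]
      constructor
      · rintro ⟨-, x, hx⟩
        obtain ⟨hxA, hi, hv⟩ := hFs hx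
        rw [← hv]
        exact (Finset.mem_sort _).mp (List.getElem_mem hi)
      · intro hy
        have hj : (sortedList B).idxOf y < (sortedList B).length :=
          List.idxOf_lt_length_iff.mpr ((Finset.mem_sort _).mpr hy)
        have hj' : (sortedList B).idxOf y < (sortedList A).length := by omega
        refine ⟨hB hy, (sortedList A)[(sortedList B).idxOf y]'hj', ?_⟩
        have hmem : (sortedList A)[(sortedList B).idxOf y]'hj' ∈ A :=
          (Finset.mem_sort _).mp (List.getElem_mem hj')
        rw [hFval hmem]
        have hidx2 : (sortedList A).idxOf
            ((sortedList A)[(sortedList B).idxOf y]'hj') =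
            (sortedList B).idxOf y := List.Nodup.idxOf_getElem hsaN _ hj'
        congr 1
        simp only [hidx2]
        exact List.getElem_idxOf hj


end IOFpar
end

section
/- For every α ∈ IOF_n^par, dom(α) ∼ im(α). -/
namespace IOFpar

lemma fence_or_iff {a b : ℕ} (h : a < b) : (fence a b ∨ fence b a) ↔ b = a + 1 := by
  constructor
  · rintro (⟨h1, -⟩ | ⟨h1, -⟩) <;> omega
  · rintro rfl
    rcases Nat.even_or_odd a with he | ho
    · exact Or.inr ⟨Or.inr rfl, he.add_one, he⟩
    · exact Or.inl ⟨Or.inl rfl, ho, ho.add_one⟩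

lemma PInj.mem_dom_iff {n : ℕ} (α : PInj n) {x : ℕ} :
    x ∈ α.dom ↔ ∃ y, α.f x = some y := by
  unfold PInj.dom
  simp only [Finset.mem_filter, Option.isSome_iff_exists]
  exact ⟨fun h => h.2, fun h => ⟨(α.mem_bounds h.choose_spec).1, h⟩⟩

lemma PInj.mem_im_iff {n : ℕ} (α : PInj n) {y : ℕ} :
    y ∈ α.im ↔ ∃ x, α.f x = some y := by
  unfold PInj.im
  simp only [Finset.mem_filter]
  exact ⟨fun h => h.2, fun h => ⟨(α.mem_bounds h.choose_spec).2, h⟩⟩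

/-- For every `α ∈ IOF_n^par`, `dom(α) ∼ im(α)`. -/
theorem statement_4 (n : ℕ) (hn : 0 < n) (α : PInj n) (hα : α ∈ IOF n) :
    sim α.dom α.im := by
  obtain ⟨hord, hpar, hfen, hfen'⟩ := hα
  have hmem : ∀ x ∈ sortedList α.dom, ∃ y, α.f x = some y := by
    intro x hx
    exact α.mem_dom_iff.mp ((Finset.mem_sort _).mp hx)
  have happ : ∀ {x y : ℕ}, α.f x = some y → α.app x = y := by
    intro x y hy; simp [PInj.app, hy]
  -- the image's sorted list is the map of the domain's sorted list
  have himM : sortedList α.im = (sortedList α.dom).map α.app := by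
    have hnd : ((sortedList α.dom).map α.app).Nodup := by
      refine (Finset.sort_nodup _ _).map_on ?_
      intro x hx x' hx' hxy
      obtain ⟨y, hy⟩ := hmem x hx
      obtain ⟨y', hy'⟩ := hmem x' hx'
      have hyy : y = y' := by rw [← happ hy, ← happ hy', hxy]
      exact α.inj hy (hyy ▸ hy')
    have hsorted : ((sortedList α.dom).map α.app).Pairwise (· ≤ ·) := by
      rw [List.pairwise_map]
      refine (List.sortedLT_iff_pairwise.mp (Finset.sortedLT_sort α.dom)).imp_of_mem ?_
      intro a b ha hb hab
      obtain ⟨y, hy⟩ := hmem a ha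
      obtain ⟨y', hy'⟩ := hmem b hb
      have := hord hy hy' hab
      rw [happ hy, happ hy']
      omega
    have htf : ((sortedList α.dom).map α.app).toFinset = α.im := by
      ext y
      simp only [List.mem_toFinset, List.mem_map]
      constructor
      · rintro ⟨x, hx, rfl⟩
        obtain ⟨y, hy⟩ := hmem x hx
        rw [happ hy]
        exact α.mem_im_iff.mpr ⟨x, hy⟩
      · intro hy
        obtain ⟨x, hx⟩ := α.mem_im_iff.mp hy
        refine ⟨x, ?_, happ hx⟩
        exact (Finset.mem_sort _).mpr (α.mem_dom_iff.mpr ⟨y, hx⟩)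
    rw [sortedList, ← htf, List.toFinset_sort _ hnd]
    exact hsorted
  have hlen : (sortedList α.im).length = (sortedList α.dom).length := by
    rw [himM, List.length_map]
  have hlt : ∀ (i j : ℕ) (hi : i < (sortedList α.dom).length)
      (hj : j < (sortedList α.dom).length), i < j →
      (sortedList α.dom)[i] < (sortedList α.dom)[j] :=
    List.pairwise_iff_getElem.mp (List.sortedLT_iff_pairwise.mp (Finset.sortedLT_sort α.dom))
  refine ⟨?_, ?_, ?_⟩
  · have h1 : α.dom.card = (sortedList α.dom).length := (Finset.length_sort _).symm
    have h2 : α.im.card = (sortedList α.im).length := (Finset.length_sort _).symm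
    omega
  · intro r hA hB
    have hBr : (sortedList α.im)[r] = α.app ((sortedList α.dom)[r]) := by
      simp only [himM, List.getElem_map]
    obtain ⟨y, hy⟩ := hmem _ (List.getElem_mem hA)
    rw [hBr, happ hy]
    exact hpar hy
  · intro r hA hB
    have hB0 : (sortedList α.im)[r] = α.app ((sortedList α.dom)[r]) := by
      simp only [himM, List.getElem_map]
    have hB1 : (sortedList α.im)[r + 1] = α.app ((sortedList α.dom)[r + 1]) := by
      simp only [himM, List.getElem_map]
    obtain ⟨y, hy⟩ := hmem _ (List.getElem_mem (Nat.lt_of_succ_lt hA))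
    obtain ⟨y', hy'⟩ := hmem _ (List.getElem_mem hA)
    have hxlt : (sortedList α.dom)[r] < (sortedList α.dom)[r + 1] :=
      hlt r (r + 1) (Nat.lt_of_succ_lt hA) hA (Nat.lt_succ_self r)
    have hylt : y < y' := hord hy hy' hxlt
    rw [hB0, hB1, happ hy, happ hy']
    constructor
    · intro h
      rcases (fence_or_iff hxlt).mpr h with hf | hf
      · exact (fence_or_iff hylt).mp (Or.inl (hfen hy hy' hf))
      · exact (fence_or_iff hylt).mp (Or.inr (hfen hy' hy hf))
    · intro h
      rcases (fence_or_iff hylt).mpr h with hf | hf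
      · exact (fence_or_iff hxlt).mp (Or.inl (hfen' hy hy' hf))
      · exact (fence_or_iff hxlt).mp (Or.inr (hfen' hy' hy hf))

end IOFpar
end

section
/- Let P* ⊆ P(n̄) be admissible. Let y₁, y₂, z₁, z₂ ∈ P* with |y₁| = |z₁| ≥ 2 and let r, s ∈ {1,…,|y₁|} be such that y₁^[r] = z₁^[s] = y₁ ∩ z₁, y₂ ∼ y₁, z₂ ∼ z₁, and y₂^[r] ∼ z₂^[s] ∼ y₁ ∩ z₁. Then there exist θ, δ ∈ I_{P*} with rank(θ) = rank(δ) = |y₁| such that dom(θδ) = y₂^[r] and im(θδ) = z₂^[s]. -/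
namespace IOFpar

section Helpers

lemma sl_length (A : Finset ℕ) : (sortedList A).length = A.card :=
  Finset.length_sort _

lemma sl_mem {A : Finset ℕ} {x : ℕ} : x ∈ sortedList A ↔ x ∈ A :=
  Finset.mem_sort _

lemma sl_strict {A : Finset ℕ} {i j : ℕ} (hj : j < (sortedList A).length) (hij : i < j) :
    (sortedList A)[i]'(hij.trans hj) < (sortedList A)[j] :=
  List.pairwise_iff_getElem.mp (Finset.sortedLT_sort A).pairwise i j (hij.trans hj) hj hij

lemma sl_inj {A : Finset ℕ} {i j : ℕ} (hi : i < (sortedList A).length)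
    (hj : j < (sortedList A).length) (h : (sortedList A)[i] = (sortedList A)[j]) : i = j := by
  rcases lt_trichotomy i j with h' | h' | h'
  · exact absurd h (ne_of_lt (sl_strict hj h'))
  · exact h'
  · exact absurd h.symm (ne_of_lt (sl_strict hi h'))

lemma sl_index_lt {A : Finset ℕ} {i j : ℕ} (hi : i < (sortedList A).length)
    (hj : j < (sortedList A).length) (h : (sortedList A)[i] < (sortedList A)[j]) : i < j := by
  rcases lt_trichotomy i j with h' | h' | h'
  · exact h'
  · subst h'; exact absurd h (lt_irrefl _)
  · exact absurd (sl_strict hi h') (not_lt.mpr h.le)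

/-- The underlying partial function of the canonical partial bijection from `A` to `B`. -/
noncomputable def cf (A B : Finset ℕ) (x : ℕ) : Option ℕ :=
  if x ∈ A then (sortedList B)[(sortedList A).idxOf x]? else none

lemma cf_eq_some_iff {A B : Finset ℕ} (hc : A.card = B.card) {x y : ℕ} :
    cf A B x = some y ↔ ∃ i, ∃ (_ : i < (sortedList A).length)
      (_ : i < (sortedList B).length), x = (sortedList A)[i] ∧ y = (sortedList B)[i] := by
  have hlen : (sortedList A).length = (sortedList B).length := by
    rw [sl_length, sl_length, hc]
  unfold cf
  by_cases hx : x ∈ A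
  · rw [if_pos hx]
    constructor
    · intro h
      rcases List.getElem?_eq_some_iff.mp h with ⟨hlt, hy⟩
      have hiA : (sortedList A).idxOf x < (sortedList A).length :=
        List.idxOf_lt_length_iff.mpr (sl_mem.mpr hx)
      exact ⟨(sortedList A).idxOf x, hiA, hlt, (List.getElem_idxOf hiA).symm, hy.symm⟩
    · rintro ⟨i, hi, hi', rfl, rfl⟩
      have hmem : (sortedList A)[i] ∈ sortedList A := List.getElem_mem hi
      have hiA : (sortedList A).idxOf (sortedList A)[i] < (sortedList A).length :=
        List.idxOf_lt_length_iff.mpr hmem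
      have : (sortedList A).idxOf (sortedList A)[i] = i :=
        sl_inj hiA hi (List.getElem_idxOf hiA)
      rw [this]
      exact List.getElem?_eq_some_iff.mpr ⟨hi', rfl⟩
  · rw [if_neg hx]
    constructor
    · intro h; simp at h
    · rintro ⟨i, hi, hi', rfl, rfl⟩
      exact absurd (sl_mem.mp (List.getElem_mem hi)) hx

/-- The canonical partial bijection mapping the `i`-th smallest element of `A`
to the `i`-th smallest element of `B`. -/
noncomputable def canon (n : ℕ) (A B : Finset ℕ) (hA : A ⊆ Finset.Icc 1 n)
    (hB : B ⊆ Finset.Icc 1 n) (hc : A.card = B.card) : PInj n where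
  f := cf A B
  mem_bounds := by
    intro x y h
    rcases (cf_eq_some_iff hc).mp h with ⟨i, hi, hi', rfl, rfl⟩
    exact ⟨hA (sl_mem.mp (List.getElem_mem hi)), hB (sl_mem.mp (List.getElem_mem hi'))⟩
  inj := by
    intro x₁ x₂ y h₁ h₂
    rcases (cf_eq_some_iff hc).mp h₁ with ⟨i, hi, hi', rfl, hyi⟩
    rcases (cf_eq_some_iff hc).mp h₂ with ⟨j, hj, hj', rfl, hyj⟩
    have : i = j := sl_inj hi' hj' (hyi ▸ hyj)
    subst this; rfl

lemma canon_f {n : ℕ} {A B : Finset ℕ} (hA : A ⊆ Finset.Icc 1 n) (hB : B ⊆ Finset.Icc 1 n)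
    (hc : A.card = B.card) : (canon n A B hA hB hc).f = cf A B := rfl

lemma canon_dom {n : ℕ} {A B : Finset ℕ} (hA : A ⊆ Finset.Icc 1 n) (hB : B ⊆ Finset.Icc 1 n)
    (hc : A.card = B.card) : (canon n A B hA hB hc).dom = A := by
  have hlen : (sortedList A).length = (sortedList B).length := by
    rw [sl_length, sl_length, hc]
  ext x
  simp only [PInj.dom, Finset.mem_filter]
  constructor
  · rintro ⟨-, hs⟩
    rcases Option.isSome_iff_exists.mp hs with ⟨y, hy⟩
    rcases (cf_eq_some_iff hc).mp hy with ⟨i, hi, hi', rfl, -⟩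
    exact sl_mem.mp (List.getElem_mem hi)
  · intro hx
    refine ⟨hA hx, ?_⟩
    rcases List.mem_iff_getElem.mp (sl_mem.mpr hx) with ⟨i, hi, rfl⟩
    rw [canon_f, (cf_eq_some_iff hc).mpr ⟨i, hi, hlen ▸ hi, rfl, rfl⟩]
    rfl

lemma canon_im {n : ℕ} {A B : Finset ℕ} (hA : A ⊆ Finset.Icc 1 n) (hB : B ⊆ Finset.Icc 1 n)
    (hc : A.card = B.card) : (canon n A B hA hB hc).im = B := by
  have hlen : (sortedList A).length = (sortedList B).length := by
    rw [sl_length, sl_length, hc]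
  ext y
  simp only [PInj.im, Finset.mem_filter]
  constructor
  · rintro ⟨-, x, hx⟩
    rcases (cf_eq_some_iff hc).mp hx with ⟨i, hi, hi', -, rfl⟩
    exact sl_mem.mp (List.getElem_mem hi')
  · intro hy
    refine ⟨hB hy, ?_⟩
    rcases List.mem_iff_getElem.mp (sl_mem.mpr hy) with ⟨i, hi', rfl⟩
    exact ⟨(sortedList A)[i]'(hlen ▸ hi'),
      (cf_eq_some_iff hc).mpr ⟨i, hlen ▸ hi', hi', rfl, rfl⟩⟩

lemma sim_symm {A B : Finset ℕ} (h : sim A B) : sim B A :=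
  ⟨h.1.symm, fun r hB hA => (h.2.1 r hA hB).symm, fun r hB hA => (h.2.2 r hA hB).symm⟩

lemma sim_parity {A B : Finset ℕ} (h : sim A B) {i : ℕ} (hi : i < (sortedList A).length)
    (hi' : i < (sortedList B).length) : (sortedList A)[i] % 2 = (sortedList B)[i] % 2 :=
  h.2.1 i hi hi'

lemma sim_adj {A : Finset ℕ} {i j : ℕ} (hi : i < (sortedList A).length)
    (hj : j < (sortedList A).length) (h : (sortedList A)[j] = (sortedList A)[i] + 1) :
    j = i + 1 := by
  have hij : i < j := sl_index_lt hi hj (by omega)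
  by_contra hne
  have h1 : i + 1 < j := by omega
  have h2 : (sortedList A)[i] < (sortedList A)[i + 1]'(h1.trans hj) := sl_strict (h1.trans hj) (by omega)
  have h3 : (sortedList A)[i + 1]'(h1.trans hj) < (sortedList A)[j] := sl_strict hj h1
  omega

lemma sim_fence {A B : Finset ℕ} (h : sim A B) {i j : ℕ} (hi : i < (sortedList A).length)
    (hj : j < (sortedList A).length) (hi' : i < (sortedList B).length)
    (hj' : j < (sortedList B).length)
    (hf : fence (sortedList A)[i] (sortedList A)[j]) :
    fence (sortedList B)[i] (sortedList B)[j] := by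
  obtain ⟨hd, hodd, heven⟩ := hf
  have hpi := sim_parity h hi hi'
  have hpj := sim_parity h hj hj'
  rw [Nat.odd_iff] at hodd
  rw [Nat.even_iff] at heven
  rcases hd with hd | hd
  · have hji : j = i + 1 := sim_adj hi hj hd
    subst hji
    have := (h.2.2 i hj hj').mp hd
    exact ⟨Or.inl this, Nat.odd_iff.mpr (hpi ▸ hodd), Nat.even_iff.mpr (hpj ▸ heven)⟩
  · have hij : i = j + 1 := sim_adj hj hi hd
    subst hij
    have := (h.2.2 j hi hi').mp hd
    exact ⟨Or.inr this, Nat.odd_iff.mpr (hpi ▸ hodd), Nat.even_iff.mpr (hpj ▸ heven)⟩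

lemma canon_mem_IOF {n : ℕ} {A B : Finset ℕ} (hA : A ⊆ Finset.Icc 1 n)
    (hB : B ⊆ Finset.Icc 1 n) (hc : A.card = B.card) (h : sim A B) :
    canon n A B hA hB hc ∈ IOF n := by
  refine ⟨?_, ?_, ?_, ?_⟩
  · intro x y x' y' hx hy hxy
    rcases (cf_eq_some_iff hc).mp hx with ⟨i, hi, hi', rfl, rfl⟩
    rcases (cf_eq_some_iff hc).mp hy with ⟨j, hj, hj', rfl, rfl⟩
    exact sl_strict hj' (sl_index_lt hi hj hxy)
  · intro x y hx
    rcases (cf_eq_some_iff hc).mp hx with ⟨i, hi, hi', rfl, rfl⟩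
    exact sim_parity h hi hi'
  · intro x y x' y' hx hy hf
    rcases (cf_eq_some_iff hc).mp hx with ⟨i, hi, hi', rfl, rfl⟩
    rcases (cf_eq_some_iff hc).mp hy with ⟨j, hj, hj', rfl, rfl⟩
    exact sim_fence h hi hj hi' hj' hf
  · intro x y x' y' hx hy hf
    rcases (cf_eq_some_iff hc).mp hx with ⟨i, hi, hi', rfl, rfl⟩
    rcases (cf_eq_some_iff hc).mp hy with ⟨j, hj, hj', rfl, rfl⟩
    exact sim_fence (sim_symm h) hi' hj' hi hj hf

lemma del_eq {y : Finset ℕ} {t : ℕ} (ht : t < (sortedList y).length) :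
    del y t = y.erase ((sortedList y)[t]) := by
  unfold del
  rw [List.getD_eq_getElem _ _ ht]

end Helpers

/-- (Lemma on domains and images.) Under the stated hypotheses
there exist `θ, δ ∈ I_{P*}` of rank `|y₁|` with `dom(θδ) = y₂^[r]` and
`im(θδ) = z₂^[s]`. (Indices `r, s` are 0-based here.) -/
theorem statement_10 (n : ℕ) (hn : 0 < n) (P : Set (Finset ℕ)) (hP : Admissible n P)
    (y₁ y₂ z₁ z₂ : Finset ℕ) (hy₁ : y₁ ∈ P) (hy₂ : y₂ ∈ P) (hz₁ : z₁ ∈ P) (hz₂ : z₂ ∈ P)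
    (hcard : y₁.card = z₁.card) (h2 : 2 ≤ y₁.card)
    (r s : ℕ) (hr : r < y₁.card) (hs : s < y₁.card)
    (hry : del y₁ r = y₁ ∩ z₁) (hsz : del z₁ s = y₁ ∩ z₁)
    (hsimy : sim y₂ y₁) (hsimz : sim z₂ z₁)
    (hsim₁ : sim (del y₂ r) (del z₂ s)) (hsim₂ : sim (del z₂ s) (y₁ ∩ z₁)) :
    ∃ θ ∈ IX n P, ∃ δ ∈ IX n P, θ.rank = y₁.card ∧ δ.rank = y₁.card ∧
      (θ.comp δ).dom = del y₂ r ∧ (θ.comp δ).im = del z₂ s := by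
  -- subsets of the interval
  have hy1i : y₁ ⊆ Finset.Icc 1 n := hP.1 y₁ hy₁
  have hy2i : y₂ ⊆ Finset.Icc 1 n := hP.1 y₂ hy₂
  have hz1i : z₁ ⊆ Finset.Icc 1 n := hP.1 z₁ hz₁
  have hz2i : z₂ ⊆ Finset.Icc 1 n := hP.1 z₂ hz₂
  have hc1 : y₂.card = y₁.card := hsimy.1
  have hc2 : z₁.card = z₂.card := hsimz.1.symm
  -- index bounds
  have hr₁ : r < (sortedList y₁).length := by rw [sl_length]; exact hr
  have hr₂ : r < (sortedList y₂).length := by rw [sl_length, hc1]; exact hr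
  have hs₁ : s < (sortedList z₁).length := by rw [sl_length, ← hcard]; exact hs
  have hs₂ : s < (sortedList z₂).length := by rw [sl_length, ← hc2, ← hcard]; exact hs
  set θ : PInj n := canon n y₂ y₁ hy2i hy1i hc1 with hθdef
  set δ : PInj n := canon n z₁ z₂ hz1i hz2i hc2 with hδdef
  have hθf : θ.f = cf y₂ y₁ := rfl
  have hδf : δ.f = cf z₁ z₂ := rfl
  -- domain of the composition
  have hdom : (θ.comp δ).dom = del y₂ r := by
    rw [del_eq hr₂]
    ext x
    simp only [PInj.dom, PInj.comp, Finset.mem_filter, Finset.mem_erase, hθf, hδf]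
    constructor
    · rintro ⟨hIcc, hs'⟩
      rcases Option.isSome_iff_exists.mp hs' with ⟨w, hw⟩
      rcases Option.bind_eq_some_iff.mp hw with ⟨v, hv1, hv2⟩
      rcases (cf_eq_some_iff hc1).mp hv1 with ⟨i, hi, hi', rfl, rfl⟩
      rcases (cf_eq_some_iff hc2).mp hv2 with ⟨j, hj, hj', hvv, rfl⟩
      have hmemz : (sortedList y₁)[i] ∈ z₁ := by
        rw [hvv]; exact sl_mem.mp (List.getElem_mem hj)
      have hinter : (sortedList y₁)[i] ∈ y₁ ∩ z₁ :=
        Finset.mem_inter.mpr ⟨sl_mem.mp (List.getElem_mem hi'), hmemz⟩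
      rw [← hry, del_eq hr₁] at hinter
      have hir : i ≠ r := fun h => (Finset.mem_erase.mp hinter).1 (by subst h; rfl)
      exact ⟨fun h => hir (sl_inj hi hr₂ h), sl_mem.mp (List.getElem_mem hi)⟩
    · rintro ⟨hne, hx⟩
      refine ⟨hy2i hx, ?_⟩
      rcases List.mem_iff_getElem.mp (sl_mem.mpr hx) with ⟨i, hi, rfl⟩
      have hir : i ≠ r := fun h => hne (by subst h; rfl)
      have hi₁ : i < (sortedList y₁).length := by
        rw [sl_length, ← hc1, ← sl_length]; exact hi
      have hv1 : cf y₂ y₁ ((sortedList y₂)[i]) = some ((sortedList y₁)[i]) :=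
        (cf_eq_some_iff hc1).mpr ⟨i, hi, hi₁, rfl, rfl⟩
      have hne₁ : (sortedList y₁)[i] ≠ (sortedList y₁)[r] :=
        fun h => hir (sl_inj hi₁ hr₁ h)
      have hinter : (sortedList y₁)[i] ∈ y₁ ∩ z₁ := by
        rw [← hry, del_eq hr₁]
        exact Finset.mem_erase.mpr ⟨hne₁, sl_mem.mp (List.getElem_mem hi₁)⟩
      have hmz : (sortedList y₁)[i] ∈ z₁ := (Finset.mem_inter.mp hinter).2
      rcases List.mem_iff_getElem.mp (sl_mem.mpr hmz) with ⟨j, hj, hvv⟩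
      have hj₂ : j < (sortedList z₂).length := by
        rw [sl_length, ← hc2, ← sl_length]; exact hj
      have hv2 : cf z₁ z₂ ((sortedList y₁)[i]) = some ((sortedList z₂)[j]) :=
        (cf_eq_some_iff hc2).mpr ⟨j, hj, hj₂, hvv.symm, rfl⟩
      rw [hv1, Option.bind_some, hv2]
      rfl
  -- image of the composition
  have him : (θ.comp δ).im = del z₂ s := by
    rw [del_eq hs₂]
    ext w
    classical
    simp only [PInj.im, PInj.comp, Finset.mem_filter, Finset.mem_erase, hθf, hδf]
    constructor
    · rintro ⟨hIcc, x, hw⟩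
      rcases Option.bind_eq_some_iff.mp hw with ⟨v, hv1, hv2⟩
      rcases (cf_eq_some_iff hc1).mp hv1 with ⟨i, hi, hi', rfl, rfl⟩
      rcases (cf_eq_some_iff hc2).mp hv2 with ⟨j, hj, hj', hvv, rfl⟩
      have hmemy : (sortedList z₁)[j] ∈ y₁ := by
        rw [← hvv]; exact sl_mem.mp (List.getElem_mem hi')
      have hinter : (sortedList z₁)[j] ∈ y₁ ∩ z₁ :=
        Finset.mem_inter.mpr ⟨hmemy, sl_mem.mp (List.getElem_mem hj)⟩
      rw [← hsz, del_eq hs₁] at hinter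
      have hjs : j ≠ s := fun h => (Finset.mem_erase.mp hinter).1 (by subst h; rfl)
      exact ⟨fun h => hjs (sl_inj hj' hs₂ h), sl_mem.mp (List.getElem_mem hj')⟩
    · rintro ⟨hne, hw⟩
      refine ⟨hz2i hw, ?_⟩
      rcases List.mem_iff_getElem.mp (sl_mem.mpr hw) with ⟨j, hj₂, rfl⟩
      have hjs : j ≠ s := fun h => hne (by subst h; rfl)
      have hj₁ : j < (sortedList z₁).length := by
        rw [sl_length, hc2, ← sl_length]; exact hj₂
      have hne₁ : (sortedList z₁)[j] ≠ (sortedList z₁)[s] :=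
        fun h => hjs (sl_inj hj₁ hs₁ h)
      have hinter : (sortedList z₁)[j] ∈ y₁ ∩ z₁ := by
        rw [← hsz, del_eq hs₁]
        exact Finset.mem_erase.mpr ⟨hne₁, sl_mem.mp (List.getElem_mem hj₁)⟩
      have hmy : (sortedList z₁)[j] ∈ y₁ := (Finset.mem_inter.mp hinter).1
      rcases List.mem_iff_getElem.mp (sl_mem.mpr hmy) with ⟨i, hi₁, hvv⟩
      have hi₂ : i < (sortedList y₂).length := by
        rw [sl_length, hc1, ← sl_length]; exact hi₁
      refine ⟨(sortedList y₂)[i], ?_⟩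
      have hv1 : cf y₂ y₁ ((sortedList y₂)[i]) = some ((sortedList y₁)[i]) :=
        (cf_eq_some_iff hc1).mpr ⟨i, hi₂, hi₁, rfl, rfl⟩
      have hv2 : cf z₁ z₂ ((sortedList z₁)[j]) = some ((sortedList z₂)[j]) :=
        (cf_eq_some_iff hc2).mpr ⟨j, hj₁, hj₂, rfl, rfl⟩
      rw [hv1, Option.bind_some, hvv, hv2]
  refine ⟨θ, ⟨canon_mem_IOF hy2i hy1i hc1 hsimy, by
      rw [hθdef, canon_dom]; exact hy₂⟩,
    δ, ⟨canon_mem_IOF hz1i hz2i hc2 (sim_symm hsimz), by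
      rw [hδdef, canon_dom]; exact hz₁⟩, ?_, ?_, hdom, him⟩
  · show θ.dom.card = y₁.card
    rw [hθdef, canon_dom]; exact hc1
  · show δ.dom.card = y₁.card
    rw [hδdef, canon_dom]; exact hcard.symm

end IOFpar
end
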